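/- arXiv:1607.06955 — 6 statements merged into one kernel-verified Lean document; each statement's English description precedes it below -/
import Mathlib

section
/- Let 𝔤 be a finite-dimensional Lie algebra over a field k of characteristic zero such that 𝔤 is not isomorphic to a semidirect product 𝔤' ⋉ k·x for any 1-dimensional Lie ideal k·x ⊆ 𝔤. Then every finite subgroup G of the group of Lie algebra automorphisms of 𝔤 contains no pseudo-reflection other than the identity. -/
open Module

/-- A pseudo-reflection of a finite-dimensional vector space: a linear automorphism of
finite order whose fixed subspace has codimension 1. -/
def IsPseudoReflection {k L : Type*} [Field k] [AddCommGroup L] [Module k L]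
    (g : L ≃ₗ[k] L) : Prop :=
  IsOfFinOrder g ∧
    finrank k (LinearMap.ker ((g : L →ₗ[k] L) - LinearMap.id)) + 1 = finrank k L

/-- If a finite-dimensional Lie algebra `L` over a field of characteristic zero admits no
decomposition `L = V ⋉ k·x` with `V` a Lie subalgebra and `k·x` a one-dimensional Lie ideal,
then every finite subgroup of the group of Lie algebra automorphisms of `L` contains no
pseudo-reflection other than the identity. -/
theorem no_pseudoReflection_of_no_semidirect_decomposition
    {k L : Type*} [Field k] [CharZero k] [LieRing L] [LieAlgebra k L]
    [FiniteDimensional k L]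
    (hno : ¬ ∃ (V : LieSubalgebra k L) (I : LieIdeal k L),
        finrank k I = 1 ∧ IsCompl V.toSubmodule I.toSubmodule)
    (G : Subgroup (L ≃ₗ[k] L)) (hGfin : Finite G)
    (hLie : ∀ g ∈ G, ∀ x y : L, g ⁅x, y⁆ = ⁅g x, g y⁆) :
    ∀ g ∈ G, IsPseudoReflection g → g = 1 := by
  intro g hgG hpr
  exfalso
  apply hno
  obtain ⟨hfin, hdim⟩ := hpr
  have hg := hLie g hgG
  set n := orderOf g with hn
  have hnpos : 0 < n := hfin.orderOf_pos
  have hgn : g ^ n = 1 := pow_orderOf_eq_one g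
  set T : L →ₗ[k] L := (g : L →ₗ[k] L) with hT
  have hTapp : ∀ z : L, T z = g z := fun z => rfl
  have hTn : T ^ n = 1 := by
    ext z
    have h1 : (T ^ n) z = (⇑g)^[n] z := by
      rw [Module.End.pow_apply]
      congr 1
    have h2 : (⇑g)^[n] z = (g ^ n) z := by
      rw [LinearEquiv.pow_apply]
    simp [h1, h2, hgn]
  set S : L →ₗ[k] L := ∑ i ∈ Finset.range n, T ^ i with hS
  have hTS : T * S = S := by
    have key : ∑ i ∈ Finset.range n, T ^ (i + 1) = S := by
      have h1 : ∑ i ∈ Finset.range (n + 1), T ^ i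
          = (∑ i ∈ Finset.range n, T ^ (i + 1)) + T ^ 0 :=
        Finset.sum_range_succ' _ n
      have h2 : ∑ i ∈ Finset.range (n + 1), T ^ i = S + T ^ n :=
        Finset.sum_range_succ _ n
      have : (∑ i ∈ Finset.range n, T ^ (i + 1)) + T ^ 0 = S + T ^ n := by
        rw [← h1, h2]
      simpa [hTn] using this
    calc T * S = ∑ i ∈ Finset.range n, T * T ^ i := by
          rw [hS, Finset.mul_sum]
      _ = ∑ i ∈ Finset.range n, T ^ (i + 1) := by
          simp [pow_succ']
      _ = S := key
  have hST : S * T = S := by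
    have key : ∑ i ∈ Finset.range n, T ^ (i + 1) = S := by
      have h1 : ∑ i ∈ Finset.range (n + 1), T ^ i
          = (∑ i ∈ Finset.range n, T ^ (i + 1)) + T ^ 0 :=
        Finset.sum_range_succ' _ n
      have h2 : ∑ i ∈ Finset.range (n + 1), T ^ i = S + T ^ n :=
        Finset.sum_range_succ _ n
      have : (∑ i ∈ Finset.range n, T ^ (i + 1)) + T ^ 0 = S + T ^ n := by
        rw [← h1, h2]
      simpa [hTn] using this
    calc S * T = ∑ i ∈ Finset.range n, T ^ i * T := by
          rw [hS, Finset.sum_mul]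
      _ = ∑ i ∈ Finset.range n, T ^ (i + 1) := by
          simp [pow_succ]
      _ = S := key
  have hnk : (n : k) ≠ 0 := Nat.cast_ne_zero.mpr hnpos.ne'
  set P : L →ₗ[k] L := (n : k)⁻¹ • S with hP
  have hTP : T * P = P := by
    rw [hP, mul_smul_comm, hTS]
  have hPT : P * T = P := by
    rw [hP, smul_mul_assoc, hST]
  -- P fixes fixed vectors
  have hfix : ∀ v : L, T v = v → P v = v := by
    intro v hv
    have hpow : ∀ i, (T ^ i) v = v := by
      intro i
      induction i with
      | zero => simp
      | succ i ih => rw [pow_succ', Module.End.mul_apply, ih, hv]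
    have hSv : S v = (n : k) • v := by
      rw [hS, LinearMap.sum_apply]
      simp [hpow, Finset.sum_const, ← Nat.cast_smul_eq_nsmul k]
    rw [hP, LinearMap.smul_apply, hSv, smul_smul, inv_mul_cancel₀ hnk, one_smul]
  -- range of P consists of fixed vectors
  have hrange : ∀ y : L, T (P y) = P y := by
    intro y
    simpa using LinearMap.congr_fun hTP y
  have hPP : ∀ y : L, P (P y) = P y := fun y => hfix _ (hrange y)
  have hPTapp : ∀ y : L, P (T y) = P y := by
    intro y
    simpa using LinearMap.congr_fun hPT y
  set Vsub : Submodule k L := LinearMap.ker (T - 1) with hVsub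
  have hVmem : ∀ z : L, z ∈ Vsub ↔ T z = z := by
    intro z
    rw [hVsub, LinearMap.mem_ker, LinearMap.sub_apply, Module.End.one_apply, sub_eq_zero]
  have hproj : LinearMap.IsProj Vsub P := by
    constructor
    · intro x
      rw [hVmem]
      exact hrange x
    · intro x hx
      exact hfix x ((hVmem x).mp hx)
  have hcompl : IsCompl Vsub (LinearMap.ker P) := hproj.isCompl
  -- dimension of the kernel of P is 1
  have hdim' : finrank k (LinearMap.ker ((g : L →ₗ[k] L) - LinearMap.id)) = finrank k Vsub := by
    congr 1
  have hdimV : finrank k Vsub + 1 = finrank k L := by rw [← hdim', hdim]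
  have hsum : finrank k Vsub + finrank k (LinearMap.ker P) = finrank k L :=
    Submodule.finrank_add_eq_of_isCompl hcompl
  have hker1 : finrank k (LinearMap.ker P) = 1 := by omega
  obtain ⟨v, hv0, hvspan⟩ := (finrank_eq_one_iff' (K := k) (V := LinearMap.ker P)).mp hker1
  set x₀ : L := (v : L) with hx₀
  have hx₀mem : x₀ ∈ LinearMap.ker P := v.2
  have hx₀ne : x₀ ≠ 0 := fun h => hv0 (Subtype.ext h)
  -- ker P is T-invariant, so x₀ is an eigenvector
  have hTx₀mem : T x₀ ∈ LinearMap.ker P := by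
    rw [LinearMap.mem_ker, hPTapp]
    exact hx₀mem
  obtain ⟨lam, hlam⟩ := hvspan ⟨T x₀, hTx₀mem⟩
  have heigx₀ : T x₀ = lam • x₀ := by
    have := congrArg (Subtype.val) hlam
    simpa [hx₀] using this.symm
  have hlam1 : lam ≠ 1 := by
    intro h
    apply hx₀ne
    have hfx : T x₀ = x₀ := by rw [heigx₀, h, one_smul]
    have : P x₀ = x₀ := hfix _ hfx
    rw [LinearMap.mem_ker.mp hx₀mem] at this
    exact this.symm
  -- every lam-eigenvector is in ker P
  have heig : ∀ z : L, T z = lam • z → z ∈ LinearMap.ker P := by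
    intro z hz
    rw [LinearMap.mem_ker]
    have h1 : P z = lam • P z := by
      have := hPTapp z
      rw [hz, map_smul] at this
      exact this.symm
    have h2 : (1 - lam) • P z = 0 := by
      rw [sub_smul, one_smul, ← h1, sub_self]
    rcases smul_eq_zero.mp h2 with h | h
    · exact absurd (sub_eq_zero.mp h).symm hlam1
    · exact h
  -- bracket with x₀ lands in ker P
  have hbr : ∀ y : L, ⁅y, x₀⁆ ∈ LinearMap.ker P := by
    intro y
    have hy1 : ⁅P y, x₀⁆ ∈ LinearMap.ker P := by
      apply heig
      rw [hTapp, hg, ← hTapp (P y), ← hTapp x₀, hrange, heigx₀, lie_smul]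
    have hy2mem : y - P y ∈ LinearMap.ker P := by
      rw [LinearMap.mem_ker, map_sub, hPP, sub_self]
    obtain ⟨c, hc⟩ := hvspan ⟨y - P y, hy2mem⟩
    have hyc : y - P y = c • x₀ := by
      have := congrArg (Subtype.val) hc
      simpa [hx₀] using this.symm
    have hy2 : ⁅y - P y, x₀⁆ = 0 := by rw [hyc, smul_lie, lie_self, smul_zero]
    have : ⁅y, x₀⁆ = ⁅P y, x₀⁆ + ⁅y - P y, x₀⁆ := by
      rw [← add_lie]
      congr 1
      abel
    rw [this, hy2, add_zero]
    exact hy1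
  -- the Lie ideal spanned by x₀ (namely ker P)
  refine ⟨⟨Vsub, ?_⟩, ⟨LinearMap.ker P, ?_⟩, hker1, hcompl⟩
  · intro x y hx hy
    have hx' : T x = x := (hVmem x).mp hx
    have hy' : T y = y := (hVmem y).mp hy
    show ⁅x, y⁆ ∈ Vsub
    rw [hVmem, hTapp, hg, ← hTapp x, ← hTapp y, hx', hy']
  · intro x m hm
    obtain ⟨c, hc⟩ := hvspan ⟨m, hm⟩
    have hmc : m = c • x₀ := by
      have := congrArg (Subtype.val) hc
      simpa [hx₀] using this.symm
    show ⁅x, m⁆ ∈ LinearMap.ker P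
    rw [hmc, lie_smul]
    exact Submodule.smul_mem _ _ (hbr x)
end

section
/- Let g be a pseudo-reflection of finite order of a finite-dimensional Lie algebra 𝔤 over a field of characteristic zero that is also a Lie algebra automorphism. Then 𝔤 decomposes as V ⊕ k·x where V = ker(g − id) is a Lie subalgebra of 𝔤, k·x is a 1-dimensional Lie ideal of 𝔤, and g(x) = a·x for some scalar a ≠ 1. -/
open Module

private lemma aux_pow_sq_zero {k L : Type*} [Field k] [AddCommGroup L] [Module k L]
    (f : Module.End k L) (hf : f * f = 0) (n : ℕ) : (1 + f) ^ n = 1 + n • f := by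
  induction n with
  | zero => simp
  | succ n ih =>
    rw [pow_succ, ih]
    have h1 : (1 + n • f) * (1 + f) = 1 + f + n • f + n • f * f := by noncomm_ring
    rw [h1, smul_mul_assoc, hf, smul_zero, add_zero, succ_nsmul]
    abel

private lemma aux_coe_pow {k L : Type*} [Field k] [AddCommGroup L] [Module k L]
    (e : L ≃ₗ[k] L) (n : ℕ) : ((e ^ n : L ≃ₗ[k] L) : L →ₗ[k] L) = (e : L →ₗ[k] L) ^ n := by
  induction n with
  | zero => rfl
  | succ n ih =>
    rw [pow_succ, pow_succ, ← ih]
    rfl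

/-- Let `g` be a Lie algebra automorphism of a finite-dimensional Lie algebra `L` over a
field of characteristic zero which has finite order and is a pseudo-reflection (its fixed
subspace `V` has codimension 1).  Then `L = V ⊕ k·x` where `V = ker (g - id)` is a Lie
subalgebra, `k·x` is a one-dimensional Lie ideal, and `g x = a • x` for some `a ≠ 1`. -/
theorem lie_decomposition_of_pseudoReflection
    {k L : Type*} [Field k] [CharZero k] [LieRing L] [LieAlgebra k L]
    [FiniteDimensional k L]
    (g : L ≃ₗ⁅k⁆ L) (hfin : IsOfFinOrder g.toLinearEquiv)
    (hpr : finrank k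
        (LinearMap.ker ((g.toLinearEquiv : L →ₗ[k] L) - LinearMap.id)) + 1 =
      finrank k L) :
    ∃ (x : L) (a : k), x ≠ 0 ∧ a ≠ 1 ∧ g x = a • x ∧
      IsCompl (LinearMap.ker ((g.toLinearEquiv : L →ₗ[k] L) - LinearMap.id))
        (Submodule.span k {x}) ∧
      (∀ u ∈ LinearMap.ker ((g.toLinearEquiv : L →ₗ[k] L) - LinearMap.id),
        ∀ v ∈ LinearMap.ker ((g.toLinearEquiv : L →ₗ[k] L) - LinearMap.id),
          ⁅u, v⁆ ∈ LinearMap.ker ((g.toLinearEquiv : L →ₗ[k] L) - LinearMap.id)) ∧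
      (∀ y : L, ⁅y, x⁆ ∈ Submodule.span k ({x} : Set L)) := by
  set f : L →ₗ[k] L := (g.toLinearEquiv : L →ₗ[k] L) - LinearMap.id with hf
  set V := LinearMap.ker f with hV
  have hfapp : ∀ y : L, f y = g y - y := by
    intro y; simp [hf]
  -- rank of f is 1
  have hrank : finrank k (LinearMap.range f) = 1 := by
    have h2 := LinearMap.finrank_range_add_finrank_ker f
    rw [← hV] at h2
    omega
  -- pick a nonzero x in range f
  have hrne : LinearMap.range f ≠ ⊥ := by
    intro h
    rw [h] at hrank
    simp at hrank
  obtain ⟨x, hxr, hx0⟩ := Submodule.exists_mem_ne_zero_of_ne_bot hrne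
  have hspan : Submodule.span k ({x} : Set L) = LinearMap.range f := by
    apply Submodule.eq_of_le_of_finrank_eq
    · rw [Submodule.span_le, Set.singleton_subset_iff]; exact hxr
    · rw [finrank_span_singleton hx0, hrank]
  -- g preserves range f, so g x = a • x
  have hgr : ∀ y ∈ LinearMap.range f, g y ∈ LinearMap.range f := by
    rintro _ ⟨y, rfl⟩
    refine ⟨g y, ?_⟩
    have hgsub : ∀ z w : L, g (z - w) = g z - g w := fun z w => g.toLinearEquiv.map_sub z w
    rw [hfapp, hfapp, hgsub]
  obtain ⟨a, ha⟩ : ∃ a : k, g x = a • x := by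
    have : g x ∈ Submodule.span k ({x} : Set L) := by
      rw [hspan]; exact hgr x hxr
    obtain ⟨a, ha⟩ := Submodule.mem_span_singleton.mp this
    exact ⟨a, ha.symm⟩
  -- a ≠ 1
  have ha1 : a ≠ 1 := by
    intro h1
    -- then x ∈ ker f, so range f ≤ ker f, so f * f = 0
    have hxker : x ∈ V := by
      rw [hV, LinearMap.mem_ker, hfapp, ha, h1, one_smul, sub_self]
    have hrk : LinearMap.range f ≤ V := by
      rw [← hspan, Submodule.span_le, Set.singleton_subset_iff]
      exact hxker
    have hff : (f : Module.End k L) * f = 0 := by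
      ext y
      have : f y ∈ V := hrk ⟨y, rfl⟩
      simpa [hV] using this
    -- finite order : g^n = 1 with n > 0
    obtain ⟨n, hn, hgn⟩ := hfin.exists_pow_eq_one
    have hone : ((g.toLinearEquiv : L →ₗ[k] L)) ^ n = 1 := by
      rw [← aux_coe_pow, hgn]; rfl
    have hcoe : (g.toLinearEquiv : L →ₗ[k] L) = 1 + f := by
      rw [hf]
      ext y
      simp
    rw [hcoe, aux_pow_sq_zero f hff n] at hone
    have hfz : (n : k) • f = 0 := by
      have : (n • f : Module.End k L) = 0 := by
        have := hone
        rwa [add_eq_left] at this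
      rw [← Nat.cast_smul_eq_nsmul k] at this
      exact this
    have : f = 0 := by
      have hnk : (n : k) ≠ 0 := Nat.cast_ne_zero.mpr hn.ne'
      have := congrArg (fun h => (n : k)⁻¹ • h) hfz
      simpa [smul_smul, inv_mul_cancel₀ hnk] using this
    -- then ker f = ⊤ contradicting hpr
    have : V = ⊤ := by rw [hV, this]; exact LinearMap.ker_zero
    rw [this] at hpr
    rw [finrank_top] at hpr
    omega
  -- f x = (a - 1) • x
  have hfx : f x = (a - 1) • x := by
    rw [hfapp, ha, sub_smul, one_smul]
  have ha1' : a - 1 ≠ 0 := sub_ne_zero.mpr ha1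
  have hmem : ∀ u : L, u ∈ V ↔ g u = u := by
    intro u
    rw [hV, LinearMap.mem_ker, hfapp, sub_eq_zero]
  -- V is a subalgebra
  have hsub : ∀ u ∈ V, ∀ v ∈ V, ⁅u, v⁆ ∈ V := by
    intro u hu v hv
    rw [hmem] at *
    rw [LieEquiv.map_lie, hu, hv]
  -- disjointness
  have hdisj : Disjoint V (Submodule.span k ({x} : Set L)) := by
    rw [Submodule.disjoint_def]
    intro y hyV hyx
    obtain ⟨c, rfl⟩ := Submodule.mem_span_singleton.mp hyx
    rw [hV, LinearMap.mem_ker, map_smul, hfx, smul_smul] at hyV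
    rcases smul_eq_zero.mp hyV with hc | hx
    · rcases mul_eq_zero.mp hc with hc | hc
      · simp [hc]
      · exact absurd hc ha1'
    · exact absurd hx hx0
  have hcompl : IsCompl V (Submodule.span k ({x} : Set L)) := by
    refine ⟨hdisj, ?_⟩
    rw [codisjoint_iff]
    apply Submodule.eq_top_of_finrank_eq
    have := Submodule.finrank_sup_add_finrank_inf_eq V (Submodule.span k ({x} : Set L))
    rw [disjoint_iff.mp hdisj] at this
    rw [finrank_span_singleton hx0] at this
    simp only [finrank_bot, add_zero] at this
    omega
  -- span x absorbs brackets with V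
  have hidealV : ∀ v ∈ V, ⁅v, x⁆ ∈ Submodule.span k ({x} : Set L) := by
    intro v hv
    set w := ⁅v, x⁆ with hw
    have hfw : f w = (a - 1) • w := by
      rw [hfapp, hw, LieEquiv.map_lie, (hmem v).mp hv, ha, lie_smul, sub_smul, one_smul]
    have : w = (a - 1)⁻¹ • f w := by
      rw [hfw, smul_smul, inv_mul_cancel₀ ha1', one_smul]
    rw [this, hspan]
    exact Submodule.smul_mem _ _ ⟨w, rfl⟩
  refine ⟨x, a, hx0, ha1, ha, hcompl, hsub, ?_⟩
  intro y
  have hy : y ∈ V ⊔ Submodule.span k ({x} : Set L) := by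
    rw [codisjoint_iff.mp hcompl.codisjoint]; trivial
  obtain ⟨u, hu, z, hz, rfl⟩ := Submodule.mem_sup.mp hy
  obtain ⟨c, rfl⟩ := Submodule.mem_span_singleton.mp hz
  rw [add_lie, smul_lie, lie_self, smul_zero, add_zero]
  exact hidealV u hu
end

section
/- Let V be a finite-dimensional vector space over an algebraically closed field of characteristic 0, and G ⊆ GL(V) a finite group acting on the commutative polynomial ring R = k[V]. If the natural map R∗G → End_{R^G}(R) is a ring isomorphism, then G is small, i.e., G contains no pseudo-reflection other than the identity. -/
noncomputable section

open MvPolynomial Module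

variable {k : Type*} [Field k] {n : ℕ}

/-- The fixed points of an algebra automorphism, as a `k`-submodule. -/
def fixedSubmoduleOf (g : MvPolynomial (Fin n) k ≃ₐ[k] MvPolynomial (Fin n) k) :
    Submodule k (MvPolynomial (Fin n) k) where
  carrier := {r | g r = r}
  add_mem' := fun hx hy => by simp only [Set.mem_setOf_eq] at *; rw [map_add, hx, hy]
  zero_mem' := by simp
  smul_mem' := fun c x hx => by simp only [Set.mem_setOf_eq] at *; rw [map_smul, hx]

/-- The invariant subring `R^G`, as a subalgebra. -/
def invariantSubalgebra (G : Subgroup (MvPolynomial (Fin n) k ≃ₐ[k] MvPolynomial (Fin n) k)) :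
    Subalgebra k (MvPolynomial (Fin n) k) where
  carrier := {r | ∀ g ∈ G, g r = r}
  mul_mem' := fun ha hb g hg => by rw [map_mul, ha g hg, hb g hg]
  add_mem' := fun ha hb g hg => by rw [map_add, ha g hg, hb g hg]
  algebraMap_mem' := fun c g _ => g.commutes c

set_option maxHeartbeats 1000000
set_option synthInstance.maxHeartbeats 800000

/-- Let `k` be algebraically closed of characteristic `0`, `dim V = n ≥ 2`,
and `G` a finite group of linear automorphisms of the polynomial ring `R = k[x₁,…,xₙ]`.
Let `B = R∗G` be the skew group ring (presented by `ι : G → B`, `j : R → B`, with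
`ι(g)j(r) = j(g·r)ι(g)` and `{ι(g)}` a basis of `B` as a left `R`-module).  If the natural
map `R∗G → End_{R^G}(R)` is a ring isomorphism, then `G` is small: `G` contains no
pseudo-reflection other than the identity. -/
theorem small_of_auslander_map_bijective
    [IsAlgClosed k] [CharZero k] (hn : 2 ≤ n)
    (G : Subgroup (MvPolynomial (Fin n) k ≃ₐ[k] MvPolynomial (Fin n) k)) [Finite G]
    (hlin : ∀ g ∈ G, ∀ i : Fin n,
      g (X i) ∈ Submodule.span k (Set.range (X : Fin n → MvPolynomial (Fin n) k)))
    (B : Type*) [Ring B] [Algebra k B]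
    (ι : G →* B) (j : MvPolynomial (Fin n) k →ₐ[k] B)
    (hskew : ∀ (g : G) (r : MvPolynomial (Fin n) k),
      ι g * j r = j ((g : MvPolynomial (Fin n) k ≃ₐ[k] MvPolynomial (Fin n) k) r) * ι g)
    (bb : @Basis G (MvPolynomial (Fin n) k) B _ _
      (Module.compHom B j.toRingHom))
    (hbb : ∀ g : G, bb g = ι g)
    (Φ : B →+* Module.End (invariantSubalgebra G) (MvPolynomial (Fin n) k))
    (hΦj : ∀ r r' : MvPolynomial (Fin n) k, Φ (j r) r' = r * r')
    (hΦι : ∀ (g : G) (r' : MvPolynomial (Fin n) k),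
      Φ (ι g) r' = (g : MvPolynomial (Fin n) k ≃ₐ[k] MvPolynomial (Fin n) k) r')
    (hbij : Function.Bijective Φ) :
    ∀ g ∈ G, finrank k
        ((Submodule.span k (Set.range (X : Fin n → MvPolynomial (Fin n) k))) ⊓
          fixedSubmoduleOf g : Submodule k (MvPolynomial (Fin n) k)) + 1 = n →
      g = 1 := by
  classical
  intro g hg hfix
  by_cases hfixall : ∀ i : Fin n, g (X i) = X i
  · -- g fixes all generators, hence g = 1
    have heq : g.toAlgHom = (AlgEquiv.refl : MvPolynomial (Fin n) k ≃ₐ[k] _).toAlgHom := by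
      apply MvPolynomial.algHom_ext
      intro i
      simpa using hfixall i
    exact AlgEquiv.ext fun r => by simpa using DFunLike.congr_fun heq r
  · exfalso
    push_neg at hfixall
    obtain ⟨i₀, hi₀⟩ := hfixall
    set W : Submodule k (MvPolynomial (Fin n) k) :=
      Submodule.span k (Set.range (X : Fin n → MvPolynomial (Fin n) k)) with hWdef
    have hXmem : ∀ i : Fin n, (X i : MvPolynomial (Fin n) k) ∈ W :=
      fun i => Submodule.subset_span ⟨i, rfl⟩
    have hcc : ∀ w ∈ W, constantCoeff w = (0 : k) := by
      intro w hw
      induction hw using Submodule.span_induction with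
      | mem x h => obtain ⟨i, rfl⟩ := h; simp
      | zero => simp
      | add x y hx hy ihx ihy => rw [map_add, ihx, ihy, add_zero]
      | smul a x hx ih => rw [smul_eq_C_mul, map_mul, ih, mul_zero]
    -- construct the linear form lam
    obtain ⟨lam, hlam0, hlamcc, hmulX⟩ :
        ∃ lam : MvPolynomial (Fin n) k, lam ≠ 0 ∧ constantCoeff lam = (0 : k) ∧
          ∀ i : Fin n, ∃ c : k, g (X i) - X i = c • lam := by
      set f : W →ₗ[k] MvPolynomial (Fin n) k :=
        (g.toLinearMap - LinearMap.id).comp W.subtype with hfdef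
      have hf_apply : ∀ w : W, f w = g (w : MvPolynomial (Fin n) k) - (w : MvPolynomial (Fin n) k) :=
        fun w => rfl
      haveI : FiniteDimensional k W := FiniteDimensional.span_of_finite k (Set.finite_range X)
      have hker_map : Submodule.map W.subtype (LinearMap.ker f) = W ⊓ fixedSubmoduleOf g := by
        ext x
        simp only [Submodule.mem_map, LinearMap.mem_ker, Submodule.mem_inf]
        constructor
        · rintro ⟨w, hw, rfl⟩
          refine ⟨w.2, ?_⟩
          have h1 := hf_apply w
          rw [hw] at h1
          exact sub_eq_zero.mp h1.symm
        · rintro ⟨hxW, hxF⟩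
          refine ⟨⟨x, hxW⟩, ?_, rfl⟩
          rw [hf_apply]
          simpa [sub_eq_zero] using (show g x = x from hxF)
      have hker_rank : finrank k (LinearMap.ker f) = n - 1 := by
        have e := Submodule.equivMapOfInjective W.subtype W.injective_subtype (LinearMap.ker f)
        have h2 : finrank k (LinearMap.ker f)
            = finrank k (Submodule.map W.subtype (LinearMap.ker f)) := e.finrank_eq
        rw [hker_map] at h2
        omega
      have hWle : finrank k W ≤ n := by
        calc finrank k W ≤ (Set.range (X : Fin n → MvPolynomial (Fin n) k)).toFinset.card :=
              finrank_span_le_card _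
          _ ≤ n := by
            rw [Set.toFinset_range]
            exact (Finset.card_image_le).trans (by simp)
      have hrn := LinearMap.finrank_range_add_finrank_ker f
      have hrange_le : finrank k (LinearMap.range f) ≤ 1 := by omega
      refine ⟨g (X i₀) - X i₀, sub_ne_zero.mpr hi₀, ?_, ?_⟩
      · rw [map_sub, hcc _ (hlin g hg i₀), hcc _ (hXmem i₀), sub_zero]
      · have hlam_mem : g (X i₀) - X i₀ ∈ LinearMap.range f := ⟨⟨X i₀, hXmem i₀⟩, rfl⟩
        have hrange_eq : LinearMap.range f = Submodule.span k {g (X i₀) - X i₀} := by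
          symm
          refine Submodule.eq_of_le_of_finrank_le ?_ ?_
          · rw [Submodule.span_le, Set.singleton_subset_iff]; exact hlam_mem
          · rw [finrank_span_singleton (sub_ne_zero.mpr hi₀)]; exact hrange_le
        intro i
        have hmem : f ⟨X i, hXmem i⟩ ∈ LinearMap.range f := ⟨_, rfl⟩
        rw [hrange_eq, Submodule.mem_span_singleton] at hmem
        obtain ⟨c, hc⟩ := hmem
        exact ⟨c, by rw [← hf_apply ⟨X i, hXmem i⟩, ← hc]⟩
    -- lam divides g r - r for every r
    have hdvd : ∀ r : MvPolynomial (Fin n) k, lam ∣ g r - r := by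
      let S : Subalgebra k (MvPolynomial (Fin n) k) :=
        { carrier := {r | lam ∣ g r - r}
          mul_mem' := by
            rintro a b ⟨s, hs⟩ ⟨t, ht⟩
            exact ⟨g a * t + s * b, by rw [map_mul]; linear_combination g a * ht + b * hs⟩
          add_mem' := by
            rintro a b ⟨s, hs⟩ ⟨t, ht⟩
            exact ⟨s + t, by rw [map_add]; linear_combination hs + ht⟩
          algebraMap_mem' := fun c => by
            show lam ∣ g (algebraMap k (MvPolynomial (Fin n) k) c)
              - algebraMap k (MvPolynomial (Fin n) k) c
            rw [AlgEquiv.commutes, sub_self]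
            exact dvd_zero _ }
      intro r
      have hadj : Algebra.adjoin k (Set.range (X : Fin n → MvPolynomial (Fin n) k)) ≤ S := by
        refine Algebra.adjoin_le ?_
        rintro _ ⟨i, rfl⟩
        obtain ⟨c, hc⟩ := hmulX i
        exact ⟨C c, by rw [hc, smul_eq_C_mul, mul_comm]⟩
      rw [MvPolynomial.adjoin_range_X] at hadj
      exact hadj Algebra.mem_top
    -- the quotient map φ(r) = (g r - r)/lam, as an R^G-linear endomorphism
    have sfun_spec : ∀ r : MvPolynomial (Fin n) k, g r - r = lam * (hdvd r).choose :=
      fun r => (hdvd r).choose_spec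
    have hs_eq : ∀ r q : MvPolynomial (Fin n) k,
        g r - r = lam * q → (hdvd r).choose = q := by
      intro r q h
      exact mul_left_cancel₀ hlam0 ((sfun_spec r).symm.trans h)
    set gbig : G := ⟨g, hg⟩ with hgbig
    have hgbig1 : gbig ≠ 1 := by
      intro h
      apply hi₀
      have h1 : g = 1 := congrArg Subtype.val h
      rw [h1]; rfl
    let φ : Module.End (invariantSubalgebra G) (MvPolynomial (Fin n) k) :=
      { toFun := fun r => (hdvd r).choose
        map_add' := fun a b => by
          refine hs_eq _ _ ?_
          rw [map_add]
          linear_combination sfun_spec a + sfun_spec b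
        map_smul' := fun u a => by
          simp only [RingHom.id_apply]
          rw [Algebra.smul_def, Algebra.smul_def]
          have hualg : (algebraMap (invariantSubalgebra G) (MvPolynomial (Fin n) k)) u
              = (u : MvPolynomial (Fin n) k) := rfl
          rw [hualg]
          refine hs_eq _ _ ?_
          rw [map_mul]
          have hufix : g (u : MvPolynomial (Fin n) k) = (u : MvPolynomial (Fin n) k) := u.2 g hg
          rw [hufix]
          linear_combination (u : MvPolynomial (Fin n) k) * sfun_spec a }
    obtain ⟨b, hb⟩ := hbij.2 φ
    have key : j lam * b = ι gbig - 1 := by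
      apply hbij.1
      refine LinearMap.ext fun r' => ?_
      have h1 : Φ (j lam * b) r' = lam * (hdvd r').choose := by
        rw [map_mul, Module.End.mul_apply, hb]
        exact hΦj lam (φ r')
      have h2 : Φ (ι gbig - 1) r' = g r' - r' := by
        rw [map_sub, map_one, LinearMap.sub_apply, Module.End.one_apply, hΦι gbig r']
      rw [h1, h2, ← sfun_spec r']
    -- compare basis coefficients at 1
    letI : Module (MvPolynomial (Fin n) k) B := Module.compHom B j.toRingHom
    have hsm : ∀ (r : MvPolynomial (Fin n) k) (x : B), r • x = j r * x := fun _ _ => rfl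
    have hcoef := congrArg (fun x => (bb.repr x) (1 : G)) key
    have hL : (bb.repr (j lam * b)) (1 : G) = lam * (bb.repr b) (1 : G) := by
      rw [← hsm, map_smul, Finsupp.smul_apply, smul_eq_mul]
    have hR : (bb.repr (ι gbig - 1)) (1 : G) = -1 := by
      have h1B : (1 : B) = bb (1 : G) := by rw [hbb, map_one]
      rw [← hbb gbig, h1B, map_sub, Finsupp.sub_apply, Basis.repr_self, Basis.repr_self,
        Finsupp.single_apply, Finsupp.single_apply]
      simp [hgbig1]
    rw [hL, hR] at hcoef
    have hfin := congrArg constantCoeff hcoef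
    rw [map_mul, hlamcc, zero_mul, map_neg, map_one] at hfin
    exact one_ne_zero (neg_eq_zero.mp hfin.symm)

end
end

section
/- Let A be a down-up algebra A(α, β) over a field k with β ≠ 0, and let a, b be the roots of t² − αt − β = 0. Then Ω₁ = xy − a·yx and Ω₂ = xy − b·yx are normal elements of A, i.e., Ω_i A = A Ω_i. -/
noncomputable section

variable (k : Type*) [Field k] (α β : k)

/-- The defining relations of the down-up algebra `A(α,β)`:
`x²y = αxyx + βyx²` and `xy² = αyxy + βy²x`, with `x = ι 0`, `y = ι 1`. -/
inductive DownUpRel : FreeAlgebra k (Fin 2) → FreeAlgebra k (Fin 2) → Prop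
  | rel1 : DownUpRel
      (FreeAlgebra.ι k (0 : Fin 2) ^ 2 * FreeAlgebra.ι k (1 : Fin 2))
      (α • (FreeAlgebra.ι k (0 : Fin 2) * FreeAlgebra.ι k (1 : Fin 2) *
          FreeAlgebra.ι k (0 : Fin 2)) +
        β • (FreeAlgebra.ι k (1 : Fin 2) * FreeAlgebra.ι k (0 : Fin 2) ^ 2))
  | rel2 : DownUpRel
      (FreeAlgebra.ι k (0 : Fin 2) * FreeAlgebra.ι k (1 : Fin 2) ^ 2)
      (α • (FreeAlgebra.ι k (1 : Fin 2) * FreeAlgebra.ι k (0 : Fin 2) *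
          FreeAlgebra.ι k (1 : Fin 2)) +
        β • (FreeAlgebra.ι k (1 : Fin 2) ^ 2 * FreeAlgebra.ι k (0 : Fin 2)))

/-- The down-up algebra `A(α,β)`. -/
def DownUp : Type _ := RingQuot (DownUpRel k α β)

instance : Ring (DownUp k α β) := inferInstanceAs (Ring (RingQuot _))
instance : Algebra k (DownUp k α β) := inferInstanceAs (Algebra k (RingQuot _))

/-- The generator `x` of `A(α,β)`. -/
def duX : DownUp k α β := RingQuot.mkAlgHom k (DownUpRel k α β) (FreeAlgebra.ι k 0)

/-- The generator `y` of `A(α,β)`. -/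
def duY : DownUp k α β := RingQuot.mkAlgHom k (DownUpRel k α β) (FreeAlgebra.ι k 1)

/-- An element `Ω` of a ring is normal if `ΩA = AΩ`. -/
def IsNormalElem {A : Type*} [Ring A] (Ω : A) : Prop :=
  ∀ r : A, (∃ s : A, Ω * r = s * Ω) ∧ (∃ s : A, r * Ω = Ω * s)

lemma du_rel1 : duX k α β ^ 2 * duY k α β =
    α • (duX k α β * duY k α β * duX k α β) + β • (duY k α β * duX k α β ^ 2) := by
  have h := RingQuot.mkAlgHom_rel k (DownUpRel.rel1 (k := k) (α := α) (β := β))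
  simp only [duX, duY, map_mul, map_pow, map_add, map_smul] at h
  exact h

lemma du_rel2 : duX k α β * duY k α β ^ 2 =
    α • (duY k α β * duX k α β * duY k α β) + β • (duY k α β ^ 2 * duX k α β) := by
  have h := RingQuot.mkAlgHom_rel k (DownUpRel.rel2 (k := k) (α := α) (β := β))
  simp only [duX, duY, map_mul, map_pow, map_add, map_smul] at h
  exact h

lemma du_comm_x (a b : k) (hsum : a + b = α) (hprod : a * b = -β) :
    duX k α β * (duX k α β * duY k α β - a • (duY k α β * duX k α β)) =
      b • ((duX k α β * duY k α β - a • (duY k α β * duX k α β)) * duX k α β) := by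
  have hb : β = -(a * b) := by rw [hprod, neg_neg]
  subst hb
  subst hsum
  have h1 := du_rel1 k (a + b) (-(a*b))
  set X := duX k (a+b) (-(a*b)) with hX
  set Y := duY k (a+b) (-(a*b)) with hY
  have e : X * (X * Y) = X ^ 2 * Y := by rw [sq, mul_assoc]
  calc X * (X * Y - a • (Y * X))
      = X ^ 2 * Y - a • (X * (Y * X)) := by rw [mul_sub, mul_smul_comm, e]
    _ = (a + b) • (X * Y * X) + (-(a*b)) • (Y * X ^ 2) - a • (X * (Y * X)) := by rw [h1]
    _ = b • ((X * Y - a • (Y * X)) * X) := by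
        simp only [sub_mul, smul_mul_assoc, mul_assoc, sq]
        module

lemma du_comm_y (a b : k) (hsum : a + b = α) (hprod : a * b = -β) :
    (duX k α β * duY k α β - a • (duY k α β * duX k α β)) * duY k α β =
      b • (duY k α β * (duX k α β * duY k α β - a • (duY k α β * duX k α β))) := by
  have hb : β = -(a * b) := by rw [hprod, neg_neg]
  subst hb
  subst hsum
  have h2 := du_rel2 k (a + b) (-(a*b))
  set X := duX k (a+b) (-(a*b)) with hX
  set Y := duY k (a+b) (-(a*b)) with hY
  have e : X * Y * Y = X * Y ^ 2 := by rw [sq, mul_assoc]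
  calc (X * Y - a • (Y * X)) * Y
      = X * Y ^ 2 - a • (Y * X * Y) := by rw [sub_mul, smul_mul_assoc, e]
    _ = (a + b) • (Y * X * Y) + (-(a*b)) • (Y ^ 2 * X) - a • (Y * X * Y) := by rw [h2]
    _ = b • (Y * (X * Y - a • (Y * X))) := by
        simp only [mul_sub, mul_smul_comm, mul_assoc, sq]
        module

lemma du_normal_of_gens (Ω : DownUp k α β)
    (hx : ∃ s, Ω * duX k α β = s * Ω) (hy : ∃ s, Ω * duY k α β = s * Ω)
    (hx' : ∃ s, duX k α β * Ω = Ω * s) (hy' : ∃ s, duY k α β * Ω = Ω * s) :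
    IsNormalElem Ω := by
  intro r
  obtain ⟨z, rfl⟩ := RingQuot.mkAlgHom_surjective k (DownUpRel k α β) r
  induction z using FreeAlgebra.induction with
  | grade0 c =>
      refine ⟨⟨algebraMap k (DownUp k α β) c, ?_⟩, ⟨algebraMap k (DownUp k α β) c, ?_⟩⟩ <;>
        rw [AlgHom.commutes]
      · exact (Algebra.commutes c Ω).symm
      · exact Algebra.commutes c Ω
  | grade1 i =>
      fin_cases i
      · exact ⟨hx, hx'⟩
      · exact ⟨hy, hy'⟩
  | mul u v hu hv =>
      obtain ⟨⟨su, hsu⟩, ⟨tu, htu⟩⟩ := hu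
      obtain ⟨⟨sv, hsv⟩, ⟨tv, htv⟩⟩ := hv
      rw [show ((RingQuot.mkAlgHom k (DownUpRel k α β)) (u * v) : DownUp k α β) = @HMul.hMul (DownUp k α β) (DownUp k α β) (DownUp k α β) instHMul ((RingQuot.mkAlgHom k (DownUpRel k α β)) u) ((RingQuot.mkAlgHom k (DownUpRel k α β)) v) from map_mul _ _ _]
      refine ⟨⟨su * sv, ?_⟩, ⟨tu * tv, ?_⟩⟩
      · exact (mul_assoc Ω (RingQuot.mkAlgHom k (DownUpRel k α β) u) (RingQuot.mkAlgHom k (DownUpRel k α β) v)).symm.trans ((congrArg (· * (RingQuot.mkAlgHom k (DownUpRel k α β) v)) hsu).trans ((mul_assoc su Ω (RingQuot.mkAlgHom k (DownUpRel k α β) v)).trans ((congrArg (su * ·) hsv).trans (mul_assoc su sv Ω).symm)))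
      · exact (mul_assoc (RingQuot.mkAlgHom k (DownUpRel k α β) u) (RingQuot.mkAlgHom k (DownUpRel k α β) v) Ω).trans ((congrArg ((RingQuot.mkAlgHom k (DownUpRel k α β) u) * ·) htv).trans ((mul_assoc (RingQuot.mkAlgHom k (DownUpRel k α β) u) Ω tv).symm.trans ((congrArg (· * tv) htu).trans (mul_assoc Ω tu tv))))
  | add u v hu hv =>
      obtain ⟨⟨su, hsu⟩, ⟨tu, htu⟩⟩ := hu
      obtain ⟨⟨sv, hsv⟩, ⟨tv, htv⟩⟩ := hv
      rw [show ((RingQuot.mkAlgHom k (DownUpRel k α β)) (u + v) : DownUp k α β) = @HAdd.hAdd (DownUp k α β) (DownUp k α β) (DownUp k α β) instHAdd ((RingQuot.mkAlgHom k (DownUpRel k α β)) u) ((RingQuot.mkAlgHom k (DownUpRel k α β)) v) from map_add _ _ _]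
      exact ⟨⟨su + sv, (mul_add Ω (RingQuot.mkAlgHom k (DownUpRel k α β) u) (RingQuot.mkAlgHom k (DownUpRel k α β) v)).trans ((congrArg₂ (· + ·) hsu hsv).trans (add_mul su sv Ω).symm)⟩,
        ⟨tu + tv, (add_mul (RingQuot.mkAlgHom k (DownUpRel k α β) u) (RingQuot.mkAlgHom k (DownUpRel k α β) v) Ω).trans ((congrArg₂ (· + ·) htu htv).trans (mul_add Ω tu tv).symm)⟩⟩

lemma du_omega_normal (hβ : β ≠ 0) (a b : k)
    (hsum : a + b = α) (hprod : a * b = -β) :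
    IsNormalElem (duX k α β * duY k α β - a • (duY k α β * duX k α β)) := by
  have hb : b ≠ 0 := by
    intro h; apply hβ; have := hprod; rw [h, mul_zero] at this
    exact (neg_eq_zero.mp this.symm)
  have hx := du_comm_x k α β a b hsum hprod
  have hy := du_comm_y k α β a b hsum hprod
  set Ω := duX k α β * duY k α β - a • (duY k α β * duX k α β) with hΩ
  apply du_normal_of_gens
  · exact ⟨b⁻¹ • duX k α β, by rw [smul_mul_assoc, hx, inv_smul_smul₀ hb]⟩
  · exact ⟨b • duY k α β, by rw [smul_mul_assoc, ← hy]⟩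
  · exact ⟨b • duX k α β, by rw [mul_smul_comm, ← hx]⟩
  · exact ⟨b⁻¹ • duY k α β, by rw [mul_smul_comm, hy, inv_smul_smul₀ hb]⟩

/-- Let `A = A(α,β)` be a down-up algebra with `β ≠ 0` and let `a, b` be the roots of
`t² - αt - β = 0` (i.e. `a + b = α` and `a * b = -β`).  Then `Ω₁ = xy - a·yx` and
`Ω₂ = xy - b·yx` are normal elements of `A`. -/
theorem downUp_omega_isNormal (hβ : β ≠ 0) (a b : k)
    (hsum : a + b = α) (hprod : a * b = -β) :
    IsNormalElem (duX k α β * duY k α β - a • (duY k α β * duX k α β)) ∧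
      IsNormalElem (duX k α β * duY k α β - b • (duY k α β * duX k α β)) := by
  refine ⟨du_omega_normal k α β hβ a b hsum hprod, du_omega_normal k α β hβ b a ?_ ?_⟩
  · rw [add_comm]; exact hsum
  · rw [mul_comm]; exact hprod

end
end

section
/- Let H be a Hopf algebra acting on an (ℕ × Γ)-graded algebra A preserving the grading, and let τ be a twisting system of A commuting with the H-action, i.e., h·τ_γ(x) = τ_γ(h·x) for all h ∈ H, γ ∈ Γ, x ∈ A. Then the H-action on the underlying space of A makes the twisted algebra A^τ a left H-module algebra. -/
noncomputable section

open DirectSum TensorProduct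

variable {k A Γ H : Type*} [Field k] [AddGroup Γ] [DecidableEq Γ]
  [Ring A] [Algebra k A] [Ring H] [HopfAlgebra k H]

variable (𝒜 : ℕ × Γ → Submodule k A) [GradedAlgebra 𝒜] (τ : Γ → (A ≃ₐ[k] A))

/-- The twisted multiplication `x ∗ y`: for `x` homogeneous of degree `(n, γ)`,
`x ∗ y = x · τ_γ(y)`, extended additively in `x` via the grading decomposition. -/
def twistMul (x y : A) : A :=
  DFinsupp.sumAddHom
    (fun d : ℕ × Γ =>
      (AddMonoidHom.mulRight ((τ d.2) y)).comp ((𝒜 d).subtype.toAddMonoidHom))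
    (DirectSum.decompose 𝒜 x)

lemma decompose_act_comm (f : A →ₗ[k] A) (hf : ∀ (d : ℕ × Γ), ∀ a ∈ 𝒜 d, f a ∈ 𝒜 d)
    (x : A) (d : ℕ × Γ) :
    (DirectSum.decompose 𝒜 (f x) d : A) = f (DirectSum.decompose 𝒜 x d : A) := by
  induction x using DirectSum.Decomposition.inductionOn 𝒜 with
  | zero => simp
  | @homogeneous j m =>
    by_cases hd : d = j
    · subst hd
      rw [DirectSum.decompose_of_mem_same 𝒜 (hf d m m.2),
        DirectSum.decompose_of_mem_same 𝒜 m.2]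
    · rw [DirectSum.decompose_of_mem_ne 𝒜 (hf j m m.2) (Ne.symm (by simpa using hd)),
        DirectSum.decompose_of_mem_ne 𝒜 m.2 (Ne.symm (by simpa using hd))]
      simp
  | add a b ha hb => simp [map_add, ha, hb]

open Classical in
lemma twistMul_eq (x y : A) :
    twistMul 𝒜 τ x y =
      ∑ d ∈ (DirectSum.decompose 𝒜 x).support, (DirectSum.decompose 𝒜 x d : A) * τ d.2 y := by
  classical
  rw [twistMul, DFinsupp.sumAddHom_apply, DFinsupp.sum]
  rfl

/-- Let a Hopf algebra `H` act on an `(ℕ × Γ)`-graded algebra `A`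
(action `act`, preserving the grading, making `A` an `H`-module algebra), and let `τ` be a
twisting system commuting with the `H`-action.  Then the same action makes the twisted
algebra `A^τ` an `H`-module algebra:  `h·(x ∗ y) = Σ (h₁·x) ∗ (h₂·y)`. -/
theorem twisted_algebra_is_module_algebra
    (hτdeg : ∀ (γ : Γ) (d : ℕ × Γ), ∀ a ∈ 𝒜 d, (τ γ) a ∈ 𝒜 d)
    (hτsys : ∀ (γ₁ γ₂ : Γ) (a : A), τ γ₁ (τ γ₂ a) = τ (γ₁ + γ₂) a)
    (act : H →ₗ[k] A →ₗ[k] A)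
    -- `act` is a module action of the algebra `H`
    (hact1 : ∀ x : A, act 1 x = x)
    (hactmul : ∀ (h h' : H) (x : A), act (h * h') x = act h (act h' x))
    -- the action preserves the grading
    (hdeg : ∀ (h : H) (d : ℕ × Γ), ∀ a ∈ 𝒜 d, act h a ∈ 𝒜 d)
    -- `A` is an `H`-module algebra for the original product:
    -- `h·(xy) = Σ (h₁·x)(h₂·y)` and `h·1 = ε(h)·1`
    (hma : ∀ (h : H) (x y : A) {ι : Type} (s : Finset ι) (a b : ι → H),
      Coalgebra.comul (R := k) h = ∑ i ∈ s, a i ⊗ₜ[k] b i →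
        act h (x * y) = ∑ i ∈ s, act (a i) x * act (b i) y)
    (hunit : ∀ h : H, act h 1 = Coalgebra.counit (R := k) h • (1 : A))
    -- the `H`-action commutes with the twisting system
    (hcomm : ∀ (h : H) (γ : Γ) (x : A), act h ((τ γ) x) = (τ γ) (act h x)) :
    ∀ (h : H) (x y : A) {ι : Type} (s : Finset ι) (a b : ι → H),
      Coalgebra.comul (R := k) h = ∑ i ∈ s, a i ⊗ₜ[k] b i →
        act h (twistMul 𝒜 τ x y) =
          ∑ i ∈ s, twistMul 𝒜 τ (act (a i) x) (act (b i) y) := by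
  classical
  intro h x y ι s a b hcomul
  have hg : ∀ (g : H) (z : A) (d : ℕ × Γ),
      (DirectSum.decompose 𝒜 (act g z) d : A) = act g (DirectSum.decompose 𝒜 z d : A) :=
    fun g z d => decompose_act_comm 𝒜 (act g) (hdeg g) z d
  have hi : ∀ i ∈ s, twistMul 𝒜 τ (act (a i) x) (act (b i) y)
      = ∑ d ∈ (DirectSum.decompose 𝒜 x).support,
          act (a i) (DirectSum.decompose 𝒜 x d : A) * τ d.2 (act (b i) y) := by
    intro i _
    rw [twistMul_eq]
    have hsub : (DirectSum.decompose 𝒜 (act (a i) x)).support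
        ⊆ (DirectSum.decompose 𝒜 x).support := by
      intro d hd
      contrapose! hd
      simp only [DFinsupp.mem_support_iff, not_not] at hd ⊢
      rw [← ZeroMemClass.coe_eq_zero] at hd ⊢
      rw [hg, hd, map_zero]
    refine (Finset.sum_subset hsub fun d _ hd => ?_).trans
      (Finset.sum_congr rfl fun d _ => ?_)
    · simp only [DFinsupp.mem_support_iff, not_not] at hd
      rw [hd]
      simp
    · rw [hg]
  calc act h (twistMul 𝒜 τ x y)
      = ∑ d ∈ (DirectSum.decompose 𝒜 x).support,
          act h ((DirectSum.decompose 𝒜 x d : A) * τ d.2 y) := by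
        rw [twistMul_eq, map_sum]
    _ = ∑ d ∈ (DirectSum.decompose 𝒜 x).support, ∑ i ∈ s,
          act (a i) (DirectSum.decompose 𝒜 x d : A) * τ d.2 (act (b i) y) := by
        refine Finset.sum_congr rfl fun d _ => ?_
        rw [hma h _ _ s a b hcomul]
        exact Finset.sum_congr rfl fun i _ => by rw [hcomm]
    _ = ∑ i ∈ s, ∑ d ∈ (DirectSum.decompose 𝒜 x).support,
          act (a i) (DirectSum.decompose 𝒜 x d : A) * τ d.2 (act (b i) y) :=
        Finset.sum_comm
    _ = ∑ i ∈ s, twistMul 𝒜 τ (act (a i) x) (act (b i) y) :=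
        (Finset.sum_congr rfl hi).symm


end
end

section
/- Let H be a Hopf algebra acting on an (ℕ × Γ)-graded algebra A preserving the grading, with twisting system τ commuting with the H-action. Extend τ to τ' on the smash product A # H by τ'_γ(x # h) = τ_γ(x) # h. Then τ' is a twisting system of A # H (with deg(1#h) = (0, 1_Γ)) and there is a graded algebra isomorphism (A # H)^{τ'} ≅ (A^τ) # H. -/
noncomputable section

open TensorProduct DirectSum

variable {k A Γ H : Type*} [Field k] [AddGroup Γ] [DecidableEq Γ]
  [Ring A] [Algebra k A] [Ring H] [HopfAlgebra k H]

variable (𝒜 : ℕ × Γ → Submodule k A) [GradedAlgebra 𝒜] (τ : Γ → (A ≃ₐ[k] A))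

/-- The action `H ⊗ A → A` as a linear map. -/
def actT (act : H →ₗ[k] A →ₗ[k] A) : H ⊗[k] A →ₗ[k] A := TensorProduct.lift act

/-- The map `h ⊗ (x' ⊗ h') ↦ Σ (h₁·x') ⊗ (h₂h')`. -/
def smashHalf (act : H →ₗ[k] A →ₗ[k] A) : H ⊗[k] (A ⊗[k] H) →ₗ[k] A ⊗[k] H :=
  (TensorProduct.map (actT act) (LinearMap.mul' k H)) ∘ₗ
    (TensorProduct.tensorTensorTensorComm k H H A H).toLinearMap ∘ₗ
    (TensorProduct.map (Coalgebra.comul (R := k)) LinearMap.id)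

/-- The multiplication of the smash product `A # H`:
`(x # h)(x' # h') = Σ x(h₁·x') # h₂h'`. -/
def smashMul (act : H →ₗ[k] A →ₗ[k] A) :
    (A ⊗[k] H) →ₗ[k] (A ⊗[k] H) →ₗ[k] A ⊗[k] H :=
  TensorProduct.curry
    ((TensorProduct.map (LinearMap.mul' k A) LinearMap.id) ∘ₗ
      (TensorProduct.assoc k A A H).symm.toLinearMap ∘ₗ
      (TensorProduct.map LinearMap.id (smashHalf act)) ∘ₗ
      (TensorProduct.assoc k A H (A ⊗[k] H)).toLinearMap)

/-- The extension `τ'_γ = τ_γ # id` of the twisting system to the smash product. -/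
def twistSmash (γ : Γ) : A ⊗[k] H →ₗ[k] A ⊗[k] H :=
  TensorProduct.map (τ γ).toLinearMap LinearMap.id

lemma smashMul_tmul' (act : H →ₗ[k] A →ₗ[k] A) (x x' : A) (h h' : H)
    {ι : Type*} (s : Finset ι) (a b : ι → H)
    (hc : Coalgebra.comul (R := k) h = ∑ i ∈ s, a i ⊗ₜ[k] b i) :
    smashMul act (x ⊗ₜ[k] h) (x' ⊗ₜ[k] h') =
      ∑ i ∈ s, (x * act (a i) x') ⊗ₜ[k] (b i * h') := by
  simp only [smashMul, smashHalf, actT, TensorProduct.curry_apply, LinearMap.comp_apply,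
    LinearEquiv.coe_coe, TensorProduct.assoc_tmul, TensorProduct.map_tmul,
    LinearMap.id_coe, id_eq, hc, TensorProduct.sum_tmul, map_sum,
    TensorProduct.tensorTensorTensorComm_tmul, TensorProduct.tmul_sum,
    TensorProduct.assoc_symm_tmul, TensorProduct.lift.tmul, LinearMap.mul'_apply]

lemma twistMul_of_mem' {n : ℕ} {γ : Γ} {x : A} (hx : x ∈ 𝒜 (n, γ)) (y : A) :
    twistMul 𝒜 τ x y = x * τ γ y := by
  unfold twistMul
  rw [DirectSum.decompose_of_mem 𝒜 hx]
  erw [DFinsupp.singleAddHom_apply, DFinsupp.sumAddHom_single]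
  rfl

/-- Let a Hopf algebra `H` act on an `(ℕ × Γ)`-graded algebra `A`
preserving the grading, with a twisting system `τ` commuting with the action.  Extend `τ`
to `τ'` on `A # H` by `τ'_γ(x # h) = τ_γ(x) # h` (with `deg(1 # h) = (0, 1_Γ)`).  Then
`τ'` is a twisting system of `A # H`, and the identity map is a graded algebra isomorphism
`(A # H)^{τ'} ≅ (A^τ) # H`: the `τ'`-twisted smash multiplication coincides with the
smash multiplication of the twisted algebra `A^τ`. -/
theorem smash_twist_iso
    (hτdeg : ∀ (γ : Γ) (d : ℕ × Γ), ∀ a ∈ 𝒜 d, (τ γ) a ∈ 𝒜 d)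
    (hτsys : ∀ (γ₁ γ₂ : Γ) (a : A), τ γ₁ (τ γ₂ a) = τ (γ₁ + γ₂) a)
    (act : H →ₗ[k] A →ₗ[k] A)
    (hact1 : ∀ x : A, act 1 x = x)
    (hactmul : ∀ (h h' : H) (x : A), act (h * h') x = act h (act h' x))
    (hdeg : ∀ (h : H) (d : ℕ × Γ), ∀ a ∈ 𝒜 d, act h a ∈ 𝒜 d)
    (hma : ∀ (h : H) (x y : A) {ι : Type} (s : Finset ι) (a b : ι → H),
      Coalgebra.comul (R := k) h = ∑ i ∈ s, a i ⊗ₜ[k] b i →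
        act h (x * y) = ∑ i ∈ s, act (a i) x * act (b i) y)
    (hunit : ∀ h : H, act h 1 = Coalgebra.counit (R := k) h • (1 : A))
    (hcomm : ∀ (h : H) (γ : Γ) (x : A), act h ((τ γ) x) = (τ γ) (act h x)) :
    -- `τ'` is a twisting system of `A # H` …
    (∀ (γ₁ γ₂ : Γ) (z : A ⊗[k] H),
      twistSmash τ γ₁ (twistSmash τ γ₂ z) = twistSmash τ (γ₁ + γ₂) z) ∧
    (∀ (γ : Γ) (u v : A ⊗[k] H),
      twistSmash τ γ (smashMul act u v) =
        smashMul act (twistSmash τ γ u) (twistSmash τ γ v)) ∧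
    -- … and `(A # H)^{τ'} = (A^τ) # H`
    (∀ (n : ℕ) (γ : Γ) (x : A), x ∈ 𝒜 (n, γ) → ∀ (x' : A) (h h' : H)
      {ι : Type} (s : Finset ι) (a b : ι → H),
      Coalgebra.comul (R := k) h = ∑ i ∈ s, a i ⊗ₜ[k] b i →
        smashMul act (x ⊗ₜ[k] h) (twistSmash τ γ (x' ⊗ₜ[k] h')) =
          ∑ i ∈ s, (twistMul 𝒜 τ x (act (a i) x')) ⊗ₜ[k] (b i * h')) := by
  refine ⟨?_, ?_, ?_⟩
  · intro γ₁ γ₂ z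
    induction z using TensorProduct.induction_on with
    | zero => simp
    | tmul x h => simp [twistSmash, hτsys]
    | add u v hu hv => simp [map_add, hu, hv]
  · intro γ u v
    induction u using TensorProduct.induction_on with
    | zero => simp
    | add u u' hu hu' => simp only [map_add, LinearMap.add_apply, hu, hu']
    | tmul x h =>
      induction v using TensorProduct.induction_on with
      | zero => simp
      | add v v' hv hv' => simp only [map_add, hv, hv']
      | tmul x' h' =>
        obtain ⟨S, hS⟩ := TensorProduct.exists_finset (Coalgebra.comul (R := k) h)
        simp only [twistSmash, TensorProduct.map_tmul, LinearMap.id_coe, id_eq]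
        rw [smashMul_tmul' act x x' h h' S (fun p => p.1) (fun p => p.2) hS,
          smashMul_tmul' act _ _ h h' S (fun p => p.1) (fun p => p.2) hS]
        simp only [map_sum, TensorProduct.map_tmul, LinearMap.id_coe, id_eq,
          AlgEquiv.toLinearMap_apply, hcomm, map_mul]
  · intro n γ x hx x' h h' ι s a b hc
    simp only [twistSmash, TensorProduct.map_tmul, LinearMap.id_coe, id_eq,
      AlgEquiv.toLinearMap_apply]
    rw [smashMul_tmul' act x (τ γ x') h h' s a b hc]
    refine Finset.sum_congr rfl fun i _ => ?_
    rw [hcomm, ← twistMul_of_mem' 𝒜 τ hx]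

end
end
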